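/- For all n ≥ 1, the k-vector space dimension of I_{n-1}/(I_n : x₃^q) equals n. -/

import Mathlib

noncomputable section
open MvPolynomial

variable {k : Type*} [Field k]

/-- `J₁ = (x₂², x₂x₃^q, x₃^{q+1})` in `T' = k[x₂,x₃]` (variables `X 0 = x₂`, `X 1 = x₃`). -/
def J1 (k : Type*) [Field k] (q : ℕ) : Ideal (MvPolynomial (Fin 2) k) :=
  Ideal.span {X 0 ^ 2, X 0 * X 1 ^ q, X 1 ^ (q + 1)}

/-- `J₂ = (x₃^{2q+1})`. -/
def J2 (k : Type*) [Field k] (q : ℕ) : Ideal (MvPolynomial (Fin 2) k) :=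
  Ideal.span {X 1 ^ (2 * q + 1)}

/-- `Iₙ = Σ_{a₁+2a₂=n} J₁^{a₁} J₂^{a₂}` (so `I₀ = T'`). -/
def filtI (k : Type*) [Field k] (q n : ℕ) : Ideal (MvPolynomial (Fin 2) k) :=
  ⨆ (a : ℕ × ℕ) (_ : a.1 + 2 * a.2 = n), J1 k q ^ a.1 * J2 k q ^ a.2

namespace Stmt8A

def ee (i j : ℕ) : Fin 2 →₀ ℕ := Finsupp.single 0 i + Finsupp.single 1 j

@[simp] lemma ee_apply0 (i j : ℕ) : ee i j 0 = i := by simp [ee]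
@[simp] lemma ee_apply1 (i j : ℕ) : ee i j 1 = j := by
  simp [ee, Finsupp.single_apply]

lemma ee_add (i j i' j' : ℕ) : ee i j + ee i' j' = ee (i+i') (j+j') := by
  ext a; fin_cases a <;> simp

lemma eq_ee (e : Fin 2 →₀ ℕ) : e = ee (e 0) (e 1) := by
  ext a; fin_cases a <;> simp

lemma ee_le_iff {i j : ℕ} {e : Fin 2 →₀ ℕ} : ee i j ≤ e ↔ i ≤ e 0 ∧ j ≤ e 1 := by
  constructor
  · intro h; exact ⟨by simpa using h 0, by simpa using h 1⟩
  · intro ⟨h0, h1⟩ a; fin_cases a <;> simpa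

lemma monomial_ee (i j : ℕ) :
    (monomial (ee i j) (1:k) : MvPolynomial (Fin 2) k) = X 0 ^ i * X 1 ^ j := by
  rw [X_pow_eq_monomial, X_pow_eq_monomial, monomial_mul, one_mul]; rfl

/-- span of monomials with exponents in S -/
def spanMono (k : Type*) [Field k] (S : Set (Fin 2 →₀ ℕ)) : Ideal (MvPolynomial (Fin 2) k) :=
  Ideal.span ((fun e => monomial e (1:k)) '' S)

lemma mem_spanMono {S : Set (Fin 2 →₀ ℕ)} {x : MvPolynomial (Fin 2) k} :
    x ∈ spanMono k S ↔ ∀ m ∈ x.support, ∃ e ∈ S, e ≤ m :=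
  mem_ideal_span_monomial_image

lemma spanMono_mul_le {A B C : Set (Fin 2 →₀ ℕ)}
    (h : ∀ a ∈ A, ∀ b ∈ B, ∃ c ∈ C, c ≤ a + b) :
    spanMono k A * spanMono k B ≤ spanMono k C := by
  rw [Ideal.mul_le]
  intro r hr s hs
  rw [mem_spanMono] at hr hs ⊢
  intro m hm
  classical
  have := MvPolynomial.support_mul r s hm
  rw [Finset.mem_add] at this
  obtain ⟨mx, hmx, my, hmy, rfl⟩ := this
  obtain ⟨a, ha, hax⟩ := hr mx hmx
  obtain ⟨b, hb, hby⟩ := hs my hmy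
  obtain ⟨c, hc, hcab⟩ := h a ha b hb
  exact ⟨c, hc, hcab.trans (add_le_add hax hby)⟩

/-- generator exponents of J1^a * J2^b -/
def D (q a b : ℕ) : Set (Fin 2 →₀ ℕ) :=
  {e | ∃ s t u, s + t + u = a ∧ e = ee (2*s+t) (q*t+(q+1)*u+(2*q+1)*b)}

def En (q n : ℕ) : Set (Fin 2 →₀ ℕ) :=
  {e | ∃ s t u b, s + t + u + 2*b = n ∧ e = ee (2*s+t) (q*t+(q+1)*u+(2*q+1)*b)}

lemma J1_pow_le (q a : ℕ) : J1 k q ^ a ≤ spanMono k (D q a 0) := by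
  induction a with
  | zero =>
    rw [pow_zero, Ideal.one_eq_top]
    have h1 : (1 : MvPolynomial (Fin 2) k) ∈ spanMono k (D q 0 0) := by
      apply Ideal.subset_span
      exact ⟨ee 0 0, ⟨0,0,0, by simp, by simp⟩, by simp [monomial_ee]⟩
    intro x _
    simpa using Ideal.mul_mem_left _ x h1
  | succ a ih =>
    rw [pow_succ]
    have hJ1 : J1 k q ≤ spanMono k (D q 1 0) := by
      rw [J1, Ideal.span_le]
      rintro x (rfl | rfl | rfl) <;> apply Ideal.subset_span
      · exact ⟨ee 2 0, ⟨1,0,0, by ring, by simp⟩, by simp [monomial_ee]⟩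
      · exact ⟨ee 1 q, ⟨0,1,0, by ring, by simp⟩, by simp [monomial_ee]⟩
      · exact ⟨ee 0 (q+1), ⟨0,0,1, by ring, by simp⟩, by simp [monomial_ee]⟩
    refine le_trans (Ideal.mul_mono ih hJ1) (spanMono_mul_le ?_)
    rintro _ ⟨s,t,u, hsum, rfl⟩ _ ⟨s',t',u', hsum', rfl⟩
    refine ⟨ee (2*(s+s')+(t+t')) (q*(t+t')+(q+1)*(u+u')+(2*q+1)*0),
      ⟨s+s', t+t', u+u', by omega, rfl⟩, ?_⟩
    rw [ee_add]
    apply le_of_eq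
    congr 1 <;> ring

lemma J1J2_pow_le (q a b : ℕ) : J1 k q ^ a * J2 k q ^ b ≤ spanMono k (D q a b) := by
  have hJ2 : J2 k q ^ b ≤ spanMono k {ee 0 ((2*q+1)*b)} := by
    rw [J2, Ideal.span_singleton_pow, Ideal.span_le]
    rintro x rfl
    apply Ideal.subset_span
    exact ⟨ee 0 ((2*q+1)*b), rfl, by show (monomial _ _ : MvPolynomial (Fin 2) k) = _; rw [monomial_ee, ← pow_mul]; simp⟩
  refine le_trans (Ideal.mul_mono (J1_pow_le q a) hJ2) (spanMono_mul_le ?_)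
  rintro _ ⟨s,t,u, hsum, rfl⟩ _ rfl
  refine ⟨ee (2*s+t) (q*t+(q+1)*u+(2*q+1)*b), ⟨s,t,u, hsum, rfl⟩, ?_⟩
  rw [ee_add]
  apply le_of_eq
  congr 1

lemma filtI_eq (q n : ℕ) : filtI k q n = spanMono k (En q n) := by
  apply le_antisymm
  · rw [filtI]
    refine iSup_le fun a => iSup_le fun ha => ?_
    refine le_trans (J1J2_pow_le q a.1 a.2) ?_
    rw [spanMono, spanMono, Ideal.span_le]
    rintro _ ⟨e, ⟨s,t,u,hsum,rfl⟩, rfl⟩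
    apply Ideal.subset_span
    exact ⟨_, ⟨s,t,u,a.2, by omega, rfl⟩, rfl⟩
  · rw [spanMono, Ideal.span_le]
    rintro _ ⟨e, ⟨s,t,u,b,hsum,rfl⟩, rfl⟩
    have hmem : (monomial (ee (2*s+t) (q*t+(q+1)*u+(2*q+1)*b)) (1:k) : MvPolynomial (Fin 2) k)
        ∈ J1 k q ^ (s+t+u) * J2 k q ^ b := by
      have h1 : (X 0 ^ 2 : MvPolynomial (Fin 2) k) ^ s ∈ J1 k q ^ s :=
        Ideal.pow_mem_pow (Ideal.subset_span (by simp)) s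
      have h2 : (X 0 * X 1 ^ q : MvPolynomial (Fin 2) k) ^ t ∈ J1 k q ^ t :=
        Ideal.pow_mem_pow (Ideal.subset_span (by simp)) t
      have h3 : (X 1 ^ (q+1) : MvPolynomial (Fin 2) k) ^ u ∈ J1 k q ^ u :=
        Ideal.pow_mem_pow (Ideal.subset_span (by simp)) u
      have h4 : (X 1 ^ (2*q+1) : MvPolynomial (Fin 2) k) ^ b ∈ J2 k q ^ b :=
        Ideal.pow_mem_pow (Ideal.subset_span (by simp [J2])) b
      have heq : (monomial (ee (2*s+t) (q*t+(q+1)*u+(2*q+1)*b)) (1:k) : MvPolynomial (Fin 2) k)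
          = ((X 0 ^ 2) ^ s * (X 0 * X 1 ^ q) ^ t * (X 1 ^ (q+1)) ^ u) * (X 1 ^ (2*q+1)) ^ b := by
        rw [monomial_ee]; ring
      rw [heq]
      refine Ideal.mul_mem_mul ?_ h4
      have : J1 k q ^ s * J1 k q ^ t * J1 k q ^ u = J1 k q ^ (s+t+u) := by
        rw [← pow_add, ← pow_add]
      rw [← this]
      exact Ideal.mul_mem_mul (Ideal.mul_mem_mul h1 h2) h3
    refine Submodule.mem_iSup_of_mem (s+t+u, b) ?_
    have hc : (s+t+u) + 2*b = n := by omega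
    exact Submodule.mem_iSup_of_mem hc hmem



/-- KEY step lemma -/
lemma key_step (q N i j s t u b : ℕ) (hq : 1 ≤ q)
    (hsum : s + t + u + 2*b = N) (hx : 2*s+t ≤ i) (hy : q*t+(q+1)*u+(2*q+1)*b ≤ j) :
    (∃ s' t' u' b', s'+t'+u'+2*b' = N+1 ∧ 2*s'+t' ≤ i ∧
      q*t'+(q+1)*u'+(2*q+1)*b' ≤ j + q) ∨
    (i = 2*s+t ∧ j = q*t+(q+1)*u+(2*q+1)*b ∧ u = 0 ∧ t ≤ 1) := by
  by_cases hx1 : 2*s+t+1 ≤ i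
  · exact Or.inl ⟨s, t+1, u, b, by omega, by omega, by nlinarith⟩
  · have hxe : i = 2*s+t := by omega
    rcases u with _ | u
    · by_cases hy1 : q*t+(q+1)*0+(2*q+1)*b + 1 ≤ j
      · exact Or.inl ⟨s, t, 1, b, by omega, by omega, by nlinarith⟩
      · have hye : j = q*t+(q+1)*0+(2*q+1)*b := by omega
        rcases Nat.lt_or_ge t 2 with ht | ht
        · exact Or.inr ⟨hxe, hye, rfl, by omega⟩
        · obtain ⟨t', rfl⟩ : ∃ t', t = t' + 2 := ⟨t - 2, by omega⟩
          refine Or.inl ⟨s+1, t', 0, b+1, by omega, by omega, by nlinarith⟩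
    · exact Or.inl ⟨s, t, u, b+1, by omega, by omega, by nlinarith⟩

/-- KEY2: nonmembership of special monomials times x₃^q -/
lemma key_nonmem (q N m r s0 s t u b : ℕ) (hq : 1 ≤ q) (hr : r ≤ 1)
    (hN : N = s0 + 2*m + r)
    (hsum : s + t + u + 2*b = N + 1) (hx : 2*s+t ≤ 2*s0 + r) :
    ¬ (q*t+(q+1)*u+(2*q+1)*b ≤ (2*q+1)*m + q*r + q) := by
  intro hy
  have hs_le : s ≤ s0 := by omega
  have hmul : q * s ≥ q * s0 + (u + b) := by nlinarith
  have hs_ge : s0 ≤ s := by nlinarith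
  have hse : s = s0 := le_antisymm hs_le hs_ge
  subst hse hN
  have hub : u + b = 0 := by omega
  omega


/-- special exponents -/
def spe (q N c : ℕ) : Fin 2 →₀ ℕ :=
  ee (2*(N-c) + c % 2) ((2*q+1)*(c/2) + q*(c%2))

lemma spe_mem (q N c : ℕ) (hc : c ≤ N) : spe q N c ∈ En q N := by
  refine ⟨N - c, c % 2, 0, c / 2, by omega, ?_⟩
  unfold spe
  congr 1
  ring

lemma spe_inj (q N : ℕ) {c c' : ℕ} (hc : c ≤ N) (hc' : c' ≤ N)
    (h : spe q N c = spe q N c') : c = c' := by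
  have h0 := congrArg (fun e : Fin 2 →₀ ℕ => e 0) h
  simp only [spe, ee_apply0] at h0
  omega

lemma spe_q_nonmem (q N c : ℕ) (hq : 1 ≤ q) (hc : c ≤ N) :
    ∀ e ∈ En q (N+1), ¬ e ≤ spe q N c + Finsupp.single 1 q := by
  rintro _ ⟨s,t,u,b,hsum,rfl⟩ hle
  rw [ee_le_iff] at hle
  obtain ⟨h0, h1⟩ := hle
  simp only [spe, Finsupp.add_apply, ee_apply0, ee_apply1, Finsupp.single_eq_same,
    Finsupp.single_eq_of_ne' (show (1:Fin 2) ≠ 0 by decide), add_zero] at h0 h1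
  refine key_nonmem q N (c/2) (c%2) (N-c) s t u b hq (by omega) (by omega) hsum ?_ ?_
  · omega
  · simpa using h1

/-- gap lemma: a monomial of `I_N` which is not special stays in `I_{N+1}` after
multiplication by `x₃^q`. -/
lemma gap (q N : ℕ) (hq : 1 ≤ q) (m' : Fin 2 →₀ ℕ)
    (hmem : ∃ e ∈ En q N, e ≤ m') (hnsp : ∀ c ≤ N, m' ≠ spe q N c) :
    ∃ e ∈ En q (N+1), e ≤ m' + Finsupp.single 1 q := by
  obtain ⟨_, ⟨s,t,u,b,hsum,rfl⟩, hle⟩ := hmem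
  rw [ee_le_iff] at hle
  rcases key_step q N (m' 0) (m' 1) s t u b hq hsum hle.1 hle.2 with
    ⟨s',t',u',b', hsum', hx', hy'⟩ | ⟨hxe, hye, hu, ht⟩
  · refine ⟨ee (2*s'+t') (q*t'+(q+1)*u'+(2*q+1)*b'), ⟨s',t',u',b',hsum',rfl⟩, ?_⟩
    rw [ee_le_iff]
    constructor
    · simpa using hx'
    · simp only [Finsupp.add_apply, ee_apply1, Finsupp.single_apply]
      simpa using hy'
  · exfalso
    refine hnsp (2*b + t) (by omega) ?_
    subst hu
    have h2 : (2*b+t)/2 = b := by omega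
    have h3 : (2*b+t)%2 = t := by omega
    rw [eq_ee m', hxe, hye]
    unfold spe
    rw [h2, h3]
    congr 1
    · omega
    · ring

/-- the kernel characterization -/
lemma ker_iff (q N : ℕ) (hq : 1 ≤ q) (w : MvPolynomial (Fin 2) k) (hw : w ∈ filtI k q N) :
    w * X 1 ^ q ∈ filtI k q (N+1) ↔ ∀ c : Fin (N+1), coeff (spe q N c) w = 0 := by
  rw [filtI_eq, mem_spanMono]
  rw [filtI_eq, mem_spanMono] at hw
  constructor
  · intro h c
    by_contra hne
    have hsupp : spe q N (c:ℕ) + Finsupp.single 1 q ∈ (w * X 1 ^ q).support := by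
      rw [mem_support_iff, X_pow_eq_monomial, coeff_mul_monomial']
      rw [if_pos (by simp), add_tsub_cancel_right, mul_one]
      exact hne
    obtain ⟨e, he, hele⟩ := h _ hsupp
    exact spe_q_nonmem q N c hq (by omega) e he hele
  · intro h m hm
    rw [mem_support_iff, X_pow_eq_monomial, coeff_mul_monomial'] at hm
    split_ifs at hm with hle
    · rw [mul_one] at hm
      have hm' : m - Finsupp.single 1 q ∈ w.support := mem_support_iff.mpr hm
      have hnsp : ∀ c ≤ N, m - Finsupp.single 1 q ≠ spe q N c := by
        intro c hc hcontra
        have := h ⟨c, by omega⟩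
        simp only at this
        rw [← hcontra] at this
        exact hm this
      obtain ⟨e, he, hele⟩ := gap q N hq _ (hw _ hm') hnsp
      rw [tsub_add_cancel_of_le hle] at hele
      exact ⟨e, he, hele⟩
    · exact absurd rfl hm

end Stmt8A

open Stmt8A in
/-- for all n ≥ 1, the k-vector space dimension of
I_{n-1}/(Iₙ : x₃^q) equals n. -/
theorem stmt_8 (q : ℕ) (hq : 1 ≤ q) (n : ℕ) (hn : 1 ≤ n) :
    Module.finrank k
      (RestrictScalars k (MvPolynomial (Fin 2) k)
        (↥(filtI k q (n - 1)) ⧸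
          Submodule.comap (filtI k q (n - 1)).subtype
            ((filtI k q n).colon (Ideal.span {X 1 ^ q} : Ideal (MvPolynomial (Fin 2) k))))) = n := by
  obtain ⟨N, rfl⟩ : ∃ N, n = N + 1 := ⟨n - 1, by omega⟩
  rw [Nat.add_sub_cancel]
  set Rg := MvPolynomial (Fin 2) k with hRg
  set I : Ideal Rg := filtI k q N with hI
  set Ncol : Submodule Rg ↥I :=
    Submodule.comap I.subtype ((filtI k q (N+1)).colon (Ideal.span {X 1 ^ q} : Ideal (MvPolynomial (Fin 2) k))) with hNcol
  have hmem_iff : ∀ p : Rg, p ∈ I →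
      (p ∈ (filtI k q (N+1)).colon (Ideal.span {X 1 ^ q} : Ideal (MvPolynomial (Fin 2) k)) ↔
        ∀ c : Fin (N+1), coeff (spe q N (c:ℕ)) p = 0) := by
    intro p hp
    rw [Ideal.mem_colon_span_singleton]
    exact ker_iff q N hq p hp
  -- the sum-of-monomials map
  set w : (Fin (N+1) → k) → Rg := fun v => ∑ c : Fin (N+1), monomial (spe q N (c:ℕ)) (v c)
    with hw
  have hwmem : ∀ v, w v ∈ I := by
    intro v
    rw [hI, filtI_eq]
    refine Submodule.sum_mem _ fun c _ => ?_
    have : (monomial (spe q N (c:ℕ)) (v c) : Rg)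
        = C (v c) * monomial (spe q N (c:ℕ)) 1 := by rw [C_mul_monomial, mul_one]
    rw [this]
    exact Ideal.mul_mem_left _ _
      (Ideal.subset_span ⟨spe q N (c:ℕ), spe_mem q N c (by omega), rfl⟩)
  have hcoeff : ∀ v (c' : Fin (N+1)), coeff (spe q N (c':ℕ)) (w v) = v c' := by
    intro v c'
    rw [hw]
    simp only
    rw [coeff_sum]
    rw [Finset.sum_eq_single c']
    · rw [coeff_monomial, if_pos rfl]
    · intro c _ hne
      rw [coeff_monomial, if_neg]
      intro hcontra
      exact hne (Fin.ext (spe_inj q N (by omega) (by omega) hcontra))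
    · intro habs
      exact absurd (Finset.mem_univ c') habs
  -- the linear map
  set G : (Fin (N+1) → k) →ₗ[k] RestrictScalars k Rg (↥I ⧸ Ncol) :=
    { toFun := fun v => Submodule.Quotient.mk (p := Ncol) (⟨w v, hwmem v⟩ : ↥I)
      map_add' := by
        intro v v'
        have hww : (⟨w (v+v'), hwmem _⟩ : ↥I) = ⟨w v, hwmem v⟩ + ⟨w v', hwmem v'⟩ := by
          apply Subtype.ext
          show w (v + v') = w v + w v'
          simp only [hw, Pi.add_apply]
          rw [← Finset.sum_add_distrib]
          exact Finset.sum_congr rfl fun c _ => by rw [map_add]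
        show Submodule.Quotient.mk (p := Ncol) (⟨w (v+v'), hwmem _⟩ : ↥I)
          = Submodule.Quotient.mk (p := Ncol) (⟨w v, hwmem v⟩ : ↥I) + Submodule.Quotient.mk (p := Ncol) (⟨w v', hwmem v'⟩ : ↥I)
        rw [hww, Submodule.Quotient.mk_add]
      map_smul' := by
        intro a v
        have hww : (⟨w (a • v), hwmem _⟩ : ↥I) = (algebraMap k Rg a) • ⟨w v, hwmem v⟩ := by
          apply Subtype.ext
          show w (a • v) = algebraMap k Rg a * w v
          simp only [hw, Pi.smul_apply, smul_eq_mul]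
          rw [algebraMap_eq, Finset.mul_sum]
          exact Finset.sum_congr rfl fun c _ => by rw [C_mul_monomial]
        show Submodule.Quotient.mk (p := Ncol) (⟨w (a • v), hwmem _⟩ : ↥I)
          = (algebraMap k Rg a) • Submodule.Quotient.mk (p := Ncol) (⟨w v, hwmem v⟩ : ↥I)
        rw [hww, Submodule.Quotient.mk_smul]
      } with hG
  have hinj : Function.Injective G := by
    rw [injective_iff_map_eq_zero]
    intro v hv
    have : (⟨w v, hwmem v⟩ : ↥I) ∈ Ncol := by
      rw [← Submodule.Quotient.mk_eq_zero]
      exact hv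
    rw [hNcol, Submodule.mem_comap] at this
    have h0 := (hmem_iff (w v) (hwmem v)).mp (by simpa using this)
    funext c
    rw [← hcoeff v c]
    exact h0 c
  have hsurj : Function.Surjective G := by
    intro x
    obtain ⟨p, rfl⟩ := Submodule.Quotient.mk_surjective Ncol x
    refine ⟨fun c => coeff (spe q N (c:ℕ)) (p:Rg), ?_⟩
    show Submodule.Quotient.mk (p := Ncol) (⟨w _, hwmem _⟩ : ↥I) = Submodule.Quotient.mk p
    rw [Submodule.Quotient.eq]
    rw [hNcol, Submodule.mem_comap, Submodule.subtype_apply]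
    have hco : (((⟨w (fun c => coeff (spe q N (c:ℕ)) (p:Rg)), hwmem _⟩ : ↥I) - p : ↥I) : Rg)
        = w (fun c => coeff (spe q N (c:ℕ)) (p:Rg)) - (p:Rg) := rfl
    rw [hco, hmem_iff _ (Submodule.sub_mem _ (hwmem _) p.2)]
    intro c
    rw [coeff_sub, hcoeff]
    exact sub_self _
  have e := LinearEquiv.ofBijective G ⟨hinj, hsurj⟩
  rw [← e.finrank_eq, Module.finrank_fin_fun]
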